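/- Let Ω ⊂ ℝ³ be a nonempty bounded open set, let σ ∈ (0, 1/√3), and set r(x) = σ · dist(x, Ωᶜ) for x ∈ Ω. Let φ : ℝ³ → ℝ be a nonnegative measurable function with φ(x) = 0 whenever |x| ≥ 2/3 and ∫_{ℝ³} φ(x) dx = 1. Then for every f ∈ L²(Ω), ∫_Ω ∫_Ω r(x)⁻³ φ((x − z)/r(x)) f(z)² dz dx ≤ (1/(1 − √3 σ)) ∫_Ω f(z)² dz. -/

import Mathlib

open MeasureTheory Metric Set
open scoped ENNReal NNReal
set_option maxHeartbeats 1000000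

local notation "E3" => EuclideanSpace ℝ (Fin 3)

lemma ray_crux {σ c C : ℝ} (hσ0 : 0 < σ) (hc0 : 0 < c) (hc1 : c < 1)
    (hR : 1 < (1 - c) * C)
    {D : ℝ → ℝ} (hD : LipschitzWith 1 D) (hDnn : ∀ ρ, 0 ≤ D ρ) (hD0 : 0 < D 0)
    {E : Set ℝ} (hE : MeasurableSet E) :
    ∫⁻ ρ in {ρ : ℝ | 0 < ρ ∧ ρ < c * D ρ} ∩ (fun ρ => ρ / (σ * D ρ)) ⁻¹' E,
        ENNReal.ofReal ((σ * D ρ)⁻¹) ≤ ENNReal.ofReal C * volume E := by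
  set V : Set ℝ := {ρ : ℝ | 0 < ρ ∧ ρ < c * D ρ} with hVdef
  set s : ℝ → ℝ := fun ρ => ρ / (σ * D ρ) with hsdef
  have h1c : 0 < 1 - c := by linarith
  have hC0 : 0 < C := by nlinarith
  have hlip : ∀ x y : ℝ, |D x - D y| ≤ |x - y| := by
    intro x y
    have := hD.dist_le_mul x y
    rwa [Real.dist_eq, Real.dist_eq, NNReal.coe_one, one_mul] at this
  set D0 := D 0 with hD0def
  set Dmin := D0 / (1 + c) with hDmindef
  set Dmax := D0 / (1 - c) with hDmaxdef
  have hDminpos : 0 < Dmin := div_pos hD0 (by linarith)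
  have hDmaxpos : 0 < Dmax := div_pos hD0 h1c
  set R := (1 - c) * C with hRdef
  set ε := (R - 1) / (R + 1) with hεdef
  have hε0 : 0 < ε := div_pos (by linarith) (by linarith)
  have hε1 : ε < 1 := by rw [div_lt_one (by linarith)]; linarith
  set η := ε * Dmin with hηdef
  have hη0 : 0 < η := mul_pos hε0 hDminpos
  set τ := η * (1 - c) / (σ * Dmax) with hτdef
  have hτ0 : 0 < τ := div_pos (mul_pos hη0 h1c) (mul_pos hσ0 hDmaxpos)
  have hVD : ∀ ρ ∈ V, 0 < D ρ := by
    intro ρ hρ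
    by_contra h
    push_neg at h
    have := mul_nonpos_of_nonneg_of_nonpos hc0.le h
    have h1 := hρ.1; have h2 := hρ.2
    linarith
  have hVlow : ∀ ρ ∈ V, Dmin ≤ D ρ := by
    intro ρ hρ
    have h1 := hρ.1; have h2 := hρ.2
    have h3 := hlip ρ 0
    rw [sub_zero, abs_of_pos h1] at h3
    have h4 := abs_le.mp h3
    rw [hDmindef, div_le_iff₀ (by linarith)]
    nlinarith [h4.1]
  have hVhigh : ∀ ρ ∈ V, D ρ ≤ Dmax := by
    intro ρ hρ
    have h1 := hρ.1; have h2 := hρ.2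
    have h3 := hlip ρ 0
    rw [sub_zero, abs_of_pos h1] at h3
    have h4 := abs_le.mp h3
    rw [hDmaxdef, le_div_iff₀ h1c]
    nlinarith [h4.2]
  have anti : ∀ ρ₁ ∈ V, ∀ ρ₂ ∈ V, ρ₁ ≤ ρ₂ →
      (ρ₂ - ρ₁) * (1 - c) / (σ * D ρ₂) ≤ s ρ₂ - s ρ₁ := by
    intro ρ₁ h₁ ρ₂ h₂ h12
    have hd1 := hVD ρ₁ h₁; have hd2 := hVD ρ₂ h₂
    have hlip2 : D ρ₂ - D ρ₁ ≤ ρ₂ - ρ₁ := by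
      have := (abs_le.mp (hlip ρ₂ ρ₁)).2
      have h' : |ρ₂ - ρ₁| = ρ₂ - ρ₁ := abs_of_nonneg (by linarith)
      linarith [abs_le.mp ((hlip ρ₂ ρ₁).trans h'.le)]
    have key : (ρ₂ - ρ₁) * (1 - c) * D ρ₁ ≤ ρ₂ * D ρ₁ - ρ₁ * D ρ₂ := by
      nlinarith [h₁.2, h₁.1]
    have hs2 : s ρ₂ - s ρ₁ = (ρ₂ * D ρ₁ - ρ₁ * D ρ₂) / (σ * D ρ₁ * D ρ₂) := by
      rw [hsdef]
      field_simp
    rw [hs2, div_le_div_iff₀ (mul_pos hσ0 hd2) (mul_pos (mul_pos hσ0 hd1) hd2)]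
    nlinarith [mul_le_mul_of_nonneg_right key (mul_pos hσ0 hd2).le]
  set J : ℕ → Set ℝ := fun m => Ico ((m : ℝ) * τ) (((m : ℝ) + 1) * τ) with hJdef
  have piece : ∀ m : ℕ, ∫⁻ ρ in V ∩ s ⁻¹' (E ∩ J m), ENNReal.ofReal ((σ * D ρ)⁻¹)
      ≤ ENNReal.ofReal C * volume (E ∩ J m) := by
    intro m
    set B := V ∩ s ⁻¹' (E ∩ J m) with hBdef
    rcases B.eq_empty_or_nonempty with hBe | ⟨ρ₀, hρ₀⟩
    · simp [hBe]
    set b := D ρ₀ with hbdef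
    have hbmin : Dmin ≤ b := hVlow ρ₀ hρ₀.1
    have hb0 : 0 < b := lt_of_lt_of_le hDminpos hbmin
    have keyclose : ∀ x ∈ B, ∀ y ∈ B, x ≤ y → y - x ≤ η := by
      intro x hx y hy hxy
      have h1 := anti x hx.1 y hy.1 hxy
      have hsx := mem_Ico.mp hx.2.2
      have hsy := mem_Ico.mp hy.2.2
      have hgap : s y - s x < τ := by linarith [hsx.1, hsy.2]
      have hDy := hVhigh y hy.1
      have hDyp := hVD y hy.1
      have h2 : (y - x) * (1 - c) / (σ * Dmax) ≤ (y - x) * (1 - c) / (σ * D y) :=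
        div_le_div_of_nonneg_left (mul_nonneg (by linarith) h1c.le) (mul_pos hσ0 hDyp)
          (mul_le_mul_of_nonneg_left hDy hσ0.le)
      have h3 : (y - x) * (1 - c) / (σ * Dmax) < η * (1 - c) / (σ * Dmax) := by
        calc (y - x) * (1 - c) / (σ * Dmax) ≤ s y - s x := h2.trans h1
          _ < τ := hgap
          _ = η * (1 - c) / (σ * Dmax) := hτdef
      have h4 : (y - x) * (1 - c) < η * (1 - c) :=
        (div_lt_div_iff_of_pos_right (mul_pos hσ0 hDmaxpos)).mp h3
      exact le_of_lt ((mul_lt_mul_iff_of_pos_right h1c).mp h4)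
    have hclose : ∀ ρ ∈ B, |ρ - ρ₀| ≤ η := by
      intro ρ hρ
      rcases le_total ρ ρ₀ with h | h
      · rw [abs_of_nonpos (by linarith)]
        linarith [keyclose ρ hρ ρ₀ hρ₀ h]
      · rw [abs_of_nonneg (by linarith)]
        linarith [keyclose ρ₀ hρ₀ ρ hρ h]
    have hDband : ∀ ρ ∈ B, b - η ≤ D ρ ∧ D ρ ≤ b + η := by
      intro ρ hρ
      have h := (hlip ρ ρ₀).trans (hclose ρ hρ)
      have h2 := abs_le.mp h
      constructor <;> [linarith [h2.1]; linarith [h2.2]]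
    have hbη : 0 < b - η := by
      have : η < Dmin := by rw [hηdef]; nlinarith
      linarith
    have hw : ∫⁻ ρ in B, ENNReal.ofReal ((σ * D ρ)⁻¹)
        ≤ ENNReal.ofReal ((σ * (b - η))⁻¹) * volume B := by
      calc ∫⁻ ρ in B, ENNReal.ofReal ((σ * D ρ)⁻¹)
          ≤ ∫⁻ _ρ in B, ENNReal.ofReal ((σ * (b - η))⁻¹) := by
            apply setLIntegral_mono measurable_const
            intro ρ hρ
            apply ENNReal.ofReal_le_ofReal
            have := (hDband ρ hρ).1
            have hDp : 0 < D ρ := hVD ρ hρ.1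
            apply inv_anti₀ (mul_pos hσ0 hbη)
            nlinarith
        _ = _ := setLIntegral_const _ _
    set K : ℝ := (1 - c) / (σ * (b + η)) with hKdef
    have hK0 : 0 < K := div_pos h1c (mul_pos hσ0 (by linarith))
    have antiB : ∀ x ∈ B, ∀ y ∈ B, K * dist x y ≤ dist (s x) (s y) := by
      have main : ∀ x ∈ B, ∀ y ∈ B, x ≤ y → K * (y - x) ≤ s y - s x := by
        intro x hx y hy hxy
        have h1 := anti x hx.1 y hy.1 hxy
        have hDy2 := (hDband y hy).2
        have hDyp := hVD y hy.1
        have h2 : K * (y - x) ≤ (y - x) * (1 - c) / (σ * D y) := by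
          rw [hKdef, div_mul_eq_mul_div, div_le_div_iff₀ (mul_pos hσ0 (by linarith : (0:ℝ) < b + η)) (mul_pos hσ0 hDyp)]
          have hmono : ((y - x) * (1 - c)) * (σ * D y) ≤ ((y - x) * (1 - c)) * (σ * (b + η)) :=
            mul_le_mul_of_nonneg_left (mul_le_mul_of_nonneg_left hDy2 hσ0.le)
              (mul_nonneg (by linarith) h1c.le)
          nlinarith [hmono]
        linarith
      intro x hx y hy
      rcases le_total x y with h | h
      · rw [Real.dist_eq, Real.dist_eq, abs_of_nonpos (by linarith), abs_of_nonpos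
          (sub_nonpos.mpr (by linarith [main x hx y hy h, mul_nonneg hK0.le (sub_nonneg.mpr h)]))]
        linarith [main x hx y hy h]
      · rw [Real.dist_eq, Real.dist_eq, abs_of_nonneg (by linarith), abs_of_nonneg
          (sub_nonneg.mpr (by linarith [main y hy x hx h, mul_nonneg hK0.le (sub_nonneg.mpr h)]))]
        linarith [main y hy x hx h]
    have hinj : Set.InjOn s B := by
      intro x hx y hy hxy
      have := antiB x hx y hy
      rw [hxy, dist_self] at this
      have hd : dist x y ≤ 0 := by nlinarith
      exact dist_le_zero.mp hd
    set g0 := Function.invFunOn s B with hg0def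
    have hg0lip : LipschitzOnWith (K⁻¹).toNNReal g0 (s '' B) := by
      apply LipschitzOnWith.of_dist_le_mul
      intro u hu v hv
      have hgu : g0 u ∈ B := Function.invFunOn_mem (by rcases hu with ⟨a, ha, rfl⟩; exact ⟨a, ha, rfl⟩)
      have hsu : s (g0 u) = u := Function.invFunOn_eq (by rcases hu with ⟨a, ha, rfl⟩; exact ⟨a, ha, rfl⟩)
      have hgv : g0 v ∈ B := Function.invFunOn_mem (by rcases hv with ⟨a, ha, rfl⟩; exact ⟨a, ha, rfl⟩)
      have hsv : s (g0 v) = v := Function.invFunOn_eq (by rcases hv with ⟨a, ha, rfl⟩; exact ⟨a, ha, rfl⟩)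
      have h := antiB _ hgu _ hgv
      rw [hsu, hsv] at h
      rw [Real.coe_toNNReal _ (inv_nonneg.mpr hK0.le), inv_mul_eq_div, le_div_iff₀ hK0]
      linarith [h]
    have hBsub : B ⊆ g0 '' (s '' B) := by
      intro ρ hρ
      have hmem : s ρ ∈ s '' B := mem_image_of_mem s hρ
      have h1 : g0 (s ρ) ∈ B := Function.invFunOn_mem ⟨ρ, hρ, rfl⟩
      have h2 : s (g0 (s ρ)) = s ρ := Function.invFunOn_eq ⟨ρ, hρ, rfl⟩
      exact ⟨s ρ, hmem, hinj h1 hρ h2⟩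
    have hvolB : volume B ≤ ENNReal.ofReal K⁻¹ * volume (E ∩ J m) := by
      calc volume B = μH[1] B := by rw [MeasureTheory.hausdorffMeasure_real]
        _ ≤ μH[1] (g0 '' (s '' B)) := measure_mono hBsub
        _ ≤ (((K⁻¹).toNNReal : ℝ≥0∞)) ^ (1 : ℝ) * μH[1] (s '' B) :=
            hg0lip.hausdorffMeasure_image_le zero_le_one
        _ ≤ ENNReal.ofReal K⁻¹ * volume (E ∩ J m) := by
            rw [ENNReal.rpow_one, MeasureTheory.hausdorffMeasure_real]
            apply mul_le_mul_right
            exact measure_mono (image_subset_iff.mpr inter_subset_right)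
    have hfinal : (σ * (b - η))⁻¹ * K⁻¹ ≤ C := by
      have hKinv : (σ * (b - η))⁻¹ * K⁻¹ = (b + η) / ((b - η) * (1 - c)) := by
        rw [hKdef]
        field_simp
      rw [hKinv, div_le_iff₀ (mul_pos hbη h1c)]
      have hRη : (R + 1) * η = (R - 1) * Dmin := by
        rw [hηdef, hεdef]
        field_simp
      have hRC : C * (1 - c) = R := by rw [hRdef]; ring
      nlinarith [mul_le_mul_of_nonneg_left hbmin (by linarith : (0:ℝ) ≤ R - 1), hRη]
    calc ∫⁻ ρ in B, ENNReal.ofReal ((σ * D ρ)⁻¹)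
        ≤ ENNReal.ofReal ((σ * (b - η))⁻¹) * volume B := hw
      _ ≤ ENNReal.ofReal ((σ * (b - η))⁻¹) * (ENNReal.ofReal K⁻¹ * volume (E ∩ J m)) :=
          mul_le_mul_right hvolB _
      _ = ENNReal.ofReal ((σ * (b - η))⁻¹ * K⁻¹) * volume (E ∩ J m) := by
          rw [← mul_assoc, ← ENNReal.ofReal_mul (by positivity)]
      _ ≤ ENNReal.ofReal C * volume (E ∩ J m) :=
          mul_le_mul_left (ENNReal.ofReal_le_ofReal hfinal) _
  -- decomposition
  have hsub : V ∩ s ⁻¹' E ⊆ ⋃ m : ℕ, (V ∩ s ⁻¹' (E ∩ J m)) := by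
    intro ρ hρ
    have hρV := hρ.1
    have hρE := hρ.2
    have hspos : 0 ≤ s ρ :=
      le_of_lt (div_pos hρV.1 (mul_pos hσ0 (hVD ρ hρV)))
    refine mem_iUnion.mpr ⟨⌊s ρ / τ⌋₊, hρV, hρE, ?_, ?_⟩
    · calc (⌊s ρ / τ⌋₊ : ℝ) * τ ≤ (s ρ / τ) * τ :=
          mul_le_mul_of_nonneg_right (Nat.floor_le (div_nonneg hspos hτ0.le)) hτ0.le
        _ = s ρ := div_mul_cancel₀ _ hτ0.ne'
    · have h := Nat.lt_floor_add_one (s ρ / τ)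
      calc s ρ = (s ρ / τ) * τ := (div_mul_cancel₀ _ hτ0.ne').symm
        _ < ((⌊s ρ / τ⌋₊ : ℝ) + 1) * τ := mul_lt_mul_of_pos_right h hτ0
  have hdisj : Pairwise (Function.onFun Disjoint fun m : ℕ => E ∩ J m) := by
    intro m n hmn
    have hJd : Disjoint (J m) (J n) := by
      rw [hJdef, Set.Ico_disjoint_Ico]
      rcases hmn.lt_or_gt with h | h
      · have : (m : ℝ) + 1 ≤ (n : ℝ) := by exact_mod_cast h
        calc min (((m:ℝ)+1)*τ) (((n:ℝ)+1)*τ) ≤ ((m:ℝ)+1)*τ := min_le_left _ _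
          _ ≤ (n:ℝ)*τ := mul_le_mul_of_nonneg_right this hτ0.le
          _ ≤ max ((m:ℝ)*τ) ((n:ℝ)*τ) := le_max_right _ _
      · have : (n : ℝ) + 1 ≤ (m : ℝ) := by exact_mod_cast h
        calc min (((m:ℝ)+1)*τ) (((n:ℝ)+1)*τ) ≤ ((n:ℝ)+1)*τ := min_le_right _ _
          _ ≤ (m:ℝ)*τ := mul_le_mul_of_nonneg_right this hτ0.le
          _ ≤ max ((m:ℝ)*τ) ((n:ℝ)*τ) := le_max_left _ _
    exact hJd.mono inter_subset_right inter_subset_right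
  calc ∫⁻ ρ in V ∩ s ⁻¹' E, ENNReal.ofReal ((σ * D ρ)⁻¹)
      ≤ ∫⁻ ρ in ⋃ m : ℕ, (V ∩ s ⁻¹' (E ∩ J m)), ENNReal.ofReal ((σ * D ρ)⁻¹) :=
        lintegral_mono_set hsub
    _ ≤ ∑' m : ℕ, ∫⁻ ρ in V ∩ s ⁻¹' (E ∩ J m), ENNReal.ofReal ((σ * D ρ)⁻¹) :=
        lintegral_iUnion_le _ _
    _ ≤ ∑' m : ℕ, ENNReal.ofReal C * volume (E ∩ J m) := ENNReal.tsum_le_tsum piece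
    _ = ENNReal.ofReal C * ∑' m : ℕ, volume (E ∩ J m) := ENNReal.tsum_mul_left
    _ = ENNReal.ofReal C * volume (⋃ m : ℕ, E ∩ J m) := by
        rw [measure_iUnion hdisj (fun m => hE.inter measurableSet_Ico)]
    _ ≤ ENNReal.ofReal C * volume E := by
        apply mul_le_mul_right
        exact measure_mono (iUnion_subset fun m => inter_subset_left)

lemma ray_lintegral {σ C : ℝ} (hσ0 : 0 < σ) (hc1 : 2 / 3 * σ < 1)
    (hR : 1 < (1 - 2 / 3 * σ) * C)
    {D : ℝ → ℝ} (hD : LipschitzWith 1 D) (hDnn : ∀ ρ, 0 ≤ D ρ) (hD0 : 0 < D 0)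
    {g : ℝ → ℝ} (hgm : Measurable g) (hg0 : ∀ t, 0 ≤ g t)
    (hgsupp : ∀ t, 2 / 3 ≤ t → g t = 0) :
    ∫⁻ ρ in Set.Ioi (0 : ℝ),
        ENNReal.ofReal (ρ ^ 2) * ENNReal.ofReal (((σ * D ρ) ^ 3)⁻¹ * g (ρ / (σ * D ρ)))
      ≤ ENNReal.ofReal C * ∫⁻ t in Set.Ioi (0 : ℝ),
          ENNReal.ofReal (t ^ 2) * ENNReal.ofReal (g t) := by
  have hc0 : (0 : ℝ) < 2 / 3 * σ := by linarith
  set c : ℝ := 2 / 3 * σ with hcdef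
  set V : Set ℝ := {ρ : ℝ | 0 < ρ ∧ ρ < c * D ρ} with hVdef
  set s : ℝ → ℝ := fun ρ => ρ / (σ * D ρ) with hsdef
  have hDc : Continuous D := hD.continuous
  have hsm : Measurable s := measurable_id.div (measurable_const.mul hDc.measurable)
  have hVm : MeasurableSet V := by
    rw [hVdef, Set.setOf_and]
    exact (measurableSet_lt measurable_const measurable_id).inter
      (measurableSet_lt measurable_id (measurable_const.mul hDc.measurable))
  have hVD : ∀ ρ ∈ V, 0 < D ρ := by
    intro ρ hρ
    by_contra h
    push_neg at h
    have := mul_nonpos_of_nonneg_of_nonpos hc0.le h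
    have h1 := hρ.1; have h2 := hρ.2
    linarith
  set w : ℝ → ℝ≥0∞ := fun ρ => ENNReal.ofReal ((σ * D ρ)⁻¹) with hwdef
  have hwm : Measurable w := (measurable_const.mul hDc.measurable).inv.ennreal_ofReal
  set F : ℝ → ℝ≥0∞ := (Set.Ioi (0:ℝ)).indicator (fun t => ENNReal.ofReal (t ^ 2) * ENNReal.ofReal (g t)) with hFdef
  have hFm : Measurable F :=
    ((measurable_id.pow_const 2).ennreal_ofReal.mul (hgm.ennreal_ofReal)).indicator measurableSet_Ioi
  -- Step 1 : integrand equals V.indicator (w * F ∘ s)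
  have hpt : ∀ ρ : ℝ, (Set.Ioi (0:ℝ)).indicator
      (fun ρ => ENNReal.ofReal (ρ ^ 2) * ENNReal.ofReal (((σ * D ρ) ^ 3)⁻¹ * g (ρ / (σ * D ρ)))) ρ
      = V.indicator (fun ρ => w ρ * F (s ρ)) ρ := by
    intro ρ
    by_cases hρV : ρ ∈ V
    · have hρ0 : 0 < ρ := hρV.1
      have hDp : 0 < D ρ := hVD ρ hρV
      have hσD : 0 < σ * D ρ := mul_pos hσ0 hDp
      have hsρ : 0 < s ρ := div_pos hρ0 hσD
      rw [indicator_of_mem (Set.mem_Ioi.mpr hρ0), indicator_of_mem hρV, hFdef,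
          indicator_of_mem (Set.mem_Ioi.mpr hsρ)]
      show ENNReal.ofReal (ρ ^ 2) * ENNReal.ofReal (((σ * D ρ) ^ 3)⁻¹ * g (ρ / (σ * D ρ)))
        = ENNReal.ofReal ((σ * D ρ)⁻¹) *
            (ENNReal.ofReal ((ρ / (σ * D ρ)) ^ 2) * ENNReal.ofReal (g (ρ / (σ * D ρ))))
      rw [← ENNReal.ofReal_mul (by positivity), ← ENNReal.ofReal_mul (by positivity),
          ← ENNReal.ofReal_mul (by positivity)]
      congr 1
      have hne : σ * D ρ ≠ 0 := hσD.ne'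
      generalize g (ρ / (σ * D ρ)) = G
      rw [div_pow]
      field_simp
    · rw [indicator_of_notMem hρV]
      by_cases hρ0 : ρ ∈ Set.Ioi (0:ℝ)
      · have hρpos : 0 < ρ := hρ0
        rw [indicator_of_mem hρ0]
        have hnlt : ¬ (ρ < c * D ρ) := fun h => hρV ⟨hρpos, h⟩
        push_neg at hnlt
        rcases eq_or_lt_of_le (hDnn ρ) with hDz | hDp
        · rw [← hDz]
          simp
        · have hge : 2/3 ≤ ρ / (σ * D ρ) := by
            rw [le_div_iff₀ (mul_pos hσ0 hDp)]
            calc 2/3 * (σ * D ρ) = c * D ρ := by rw [hcdef]; ring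
              _ ≤ ρ := hnlt
          rw [hgsupp _ hge]
          simp
      · rw [indicator_of_notMem hρ0]
  calc ∫⁻ ρ in Set.Ioi (0 : ℝ),
        ENNReal.ofReal (ρ ^ 2) * ENNReal.ofReal (((σ * D ρ) ^ 3)⁻¹ * g (ρ / (σ * D ρ)))
      = ∫⁻ ρ, V.indicator (fun ρ => w ρ * F (s ρ)) ρ := by
        rw [← lintegral_indicator measurableSet_Ioi]
        exact lintegral_congr hpt
    _ = ∫⁻ ρ in V, w ρ * F (s ρ) := lintegral_indicator hVm _
    _ = ∫⁻ ρ, F (s ρ) ∂((volume.restrict V).withDensity w) :=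
        (lintegral_withDensity_eq_lintegral_mul_non_measurable _ hwm
          (ae_of_all _ fun ρ => ENNReal.ofReal_lt_top) _).symm
    _ = ∫⁻ t, F t ∂(((volume.restrict V).withDensity w).map s) := (lintegral_map hFm hsm).symm
    _ ≤ ∫⁻ t, F t ∂(ENNReal.ofReal C • volume) := by
        apply lintegral_mono'
        · rw [Measure.le_iff]
          intro A hA
          rw [Measure.map_apply hsm hA, withDensity_apply _ (hsm hA),
            Measure.restrict_restrict (hsm hA), Measure.smul_apply, smul_eq_mul]
          rw [Set.inter_comm]
          exact ray_crux hσ0 hc0 hc1 hR hD hDnn hD0 hA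
        · exact le_rfl
    _ = ENNReal.ofReal C * ∫⁻ t, F t := lintegral_smul_measure _ _
    _ = ENNReal.ofReal C * ∫⁻ t in Set.Ioi (0 : ℝ),
          ENNReal.ofReal (t ^ 2) * ENNReal.ofReal (g t) := by
        rw [hFdef, lintegral_indicator measurableSet_Ioi]

lemma polar3 (F : E3 → ℝ≥0∞) (hF : Measurable F) :
    ∫⁻ y, F y = ∫⁻ ω : sphere (0 : E3) 1,
        (∫⁻ ρ in Set.Ioi (0 : ℝ), ENNReal.ofReal (ρ ^ 2) * F (ρ • (ω : E3)))
      ∂((volume : Measure E3).toSphere) := by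
  have hdim : Module.finrank ℝ E3 = 3 := finrank_euclideanSpace_fin
  set G : sphere (0 : E3) 1 × Set.Ioi (0 : ℝ) → ℝ≥0∞ :=
    fun p => F ((p.2 : ℝ) • (p.1 : E3)) with hGdef
  have hGm : Measurable G := by
    apply hF.comp
    exact ((continuous_subtype_val.comp continuous_snd).smul
      (continuous_subtype_val.comp continuous_fst)).measurable
  have mp := (volume : Measure E3).measurePreserving_homeomorphUnitSphereProd
  calc ∫⁻ y, F y = ∫⁻ y in ({0}ᶜ : Set E3), F y := by
        rw [restrict_compl_singleton]
    _ = ∫⁻ y : ({0}ᶜ : Set E3), F y ∂((volume : Measure E3).comap Subtype.val) :=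
        (lintegral_subtype_comap (measurableSet_singleton 0).compl _).symm
    _ = ∫⁻ y : ({0}ᶜ : Set E3), G (homeomorphUnitSphereProd E3 y)
          ∂((volume : Measure E3).comap Subtype.val) := by
        apply lintegral_congr
        intro y
        rw [hGdef]
        simp only [homeomorphUnitSphereProd_apply_fst_coe, homeomorphUnitSphereProd_apply_snd_coe]
        rw [smul_inv_smul₀ (norm_ne_zero_iff.mpr y.2)]
    _ = ∫⁻ p, G p ∂((volume : Measure E3).toSphere.prod
          (MeasureTheory.Measure.volumeIoiPow (Module.finrank ℝ E3 - 1))) :=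
        mp.lintegral_comp hGm
    _ = ∫⁻ ω : sphere (0 : E3) 1, ∫⁻ r : Set.Ioi (0 : ℝ), G (ω, r)
          ∂(MeasureTheory.Measure.volumeIoiPow 2) ∂((volume : Measure E3).toSphere) := by
        rw [hdim]
        exact lintegral_prod _ hGm.aemeasurable
    _ = ∫⁻ ω : sphere (0 : E3) 1,
        (∫⁻ ρ in Set.Ioi (0 : ℝ), ENNReal.ofReal (ρ ^ 2) * F (ρ • (ω : E3)))
          ∂((volume : Measure E3).toSphere) := by
        apply lintegral_congr
        intro ω
        rw [MeasureTheory.Measure.volumeIoiPow]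
        rw [lintegral_withDensity_eq_lintegral_mul_non_measurable _
          ((measurable_subtype_coe.pow_const 2).ennreal_ofReal)
          (ae_of_all _ fun r => ENNReal.ofReal_lt_top)]
        rw [← lintegral_subtype_comap measurableSet_Ioi
          (fun ρ : ℝ => ENNReal.ofReal (ρ ^ 2) * F (ρ • (ω : E3)))]
        rfl

lemma kernel_bound {Ω : Set E3} (hopen : IsOpen Ω) (hΩc : Ωᶜ.Nonempty)
    {σ C : ℝ} (hσ0 : 0 < σ) (hc1 : 2 / 3 * σ < 1) (hR : 1 < (1 - 2 / 3 * σ) * C)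
    {φ : E3 → ℝ} (hφm : Measurable φ) (hφ0 : ∀ x, 0 ≤ φ x)
    (hφsupp : ∀ x, 2 / 3 ≤ ‖x‖ → φ x = 0)
    (hφi : ∫⁻ y, ENNReal.ofReal (φ y) = 1)
    {z : E3} (hz : z ∈ Ω) :
    ∫⁻ x in Ω, ENNReal.ofReal (((σ * infDist x Ωᶜ) ^ 3)⁻¹ *
        φ ((σ * infDist x Ωᶜ)⁻¹ • (x - z)))
      ≤ ENNReal.ofReal C := by
  have hdc : Continuous (fun x : E3 => infDist x Ωᶜ) := continuous_infDist_pt _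
  set k : E3 → ℝ≥0∞ := fun x => ENNReal.ofReal (((σ * infDist x Ωᶜ) ^ 3)⁻¹ *
      φ ((σ * infDist x Ωᶜ)⁻¹ • (x - z))) with hkdef
  have hkm : Measurable k := by
    apply Measurable.ennreal_ofReal
    apply Measurable.mul
    · exact ((measurable_const.mul hdc.measurable).pow_const 3).inv
    · exact hφm.comp (((measurable_const.mul hdc.measurable).inv).smul
        (measurable_id.sub measurable_const))
  have hzpos : 0 < infDist z Ωᶜ := by
    rw [← (hopen.isClosed_compl.notMem_iff_infDist_pos hΩc)]
    simpa using hz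
  calc ∫⁻ x in Ω, k x ≤ ∫⁻ x, k x := setLIntegral_le_lintegral _ _
    _ = ∫⁻ y, k (y + z) := ((measurePreserving_add_right volume z).lintegral_comp hkm).symm
    _ = ∫⁻ ω : sphere (0 : E3) 1,
          (∫⁻ ρ in Set.Ioi (0 : ℝ), ENNReal.ofReal (ρ ^ 2) * k (ρ • (ω : E3) + z))
        ∂((volume : Measure E3).toSphere) :=
        polar3 (fun y => k (y + z)) (hkm.comp (measurable_add_const z))
    _ ≤ ∫⁻ ω : sphere (0 : E3) 1,
          (ENNReal.ofReal C * ∫⁻ t in Set.Ioi (0 : ℝ),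
            ENNReal.ofReal (t ^ 2) * ENNReal.ofReal (φ (t • (ω : E3))))
        ∂((volume : Measure E3).toSphere) := by
        apply lintegral_mono
        intro ω
        set D : ℝ → ℝ := fun ρ => infDist (ρ • (ω : E3) + z) Ωᶜ with hDdef
        have hωn : ‖(ω : E3)‖ = 1 := mem_sphere_zero_iff_norm.mp ω.2
        have hmap : LipschitzWith 1 (fun ρ : ℝ => ρ • (ω : E3) + z) := by
          apply LipschitzWith.of_dist_le_mul
          intro a b
          rw [dist_add_right, dist_eq_norm, ← sub_smul, norm_smul, hωn, mul_one,
            NNReal.coe_one, one_mul, Real.dist_eq, Real.norm_eq_abs]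
        have hD : LipschitzWith 1 D := by
          have := (lipschitz_infDist_pt Ωᶜ).comp hmap
          rw [mul_one] at this
          exact this
        have hDnn : ∀ ρ, 0 ≤ D ρ := fun ρ => infDist_nonneg
        have hD0 : 0 < D 0 := by
          rw [hDdef]
          simpa using hzpos
        have hgm : Measurable (fun t : ℝ => φ (t • (ω : E3))) :=
          hφm.comp (measurable_id.smul_const _)
        have hgsupp : ∀ t : ℝ, 2 / 3 ≤ t → φ (t • (ω : E3)) = 0 := by
          intro t ht
          apply hφsupp
          rw [norm_smul, hωn, mul_one, Real.norm_eq_abs, abs_of_nonneg (by linarith)]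
          exact ht
        have hmatch : ∀ ρ : ℝ, ENNReal.ofReal (ρ ^ 2) * k (ρ • (ω : E3) + z)
            = ENNReal.ofReal (ρ ^ 2) *
              ENNReal.ofReal (((σ * D ρ) ^ 3)⁻¹ * φ ((ρ / (σ * D ρ)) • (ω : E3))) := by
          intro ρ
          rw [hkdef]
          simp only [add_sub_cancel_right, smul_smul, inv_mul_eq_div]
          rfl
        calc ∫⁻ ρ in Set.Ioi (0 : ℝ), ENNReal.ofReal (ρ ^ 2) * k (ρ • (ω : E3) + z)
            = ∫⁻ ρ in Set.Ioi (0 : ℝ), ENNReal.ofReal (ρ ^ 2) *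
              ENNReal.ofReal (((σ * D ρ) ^ 3)⁻¹ * φ ((ρ / (σ * D ρ)) • (ω : E3))) :=
              lintegral_congr fun ρ => hmatch ρ
          _ ≤ ENNReal.ofReal C * ∫⁻ t in Set.Ioi (0 : ℝ),
              ENNReal.ofReal (t ^ 2) * ENNReal.ofReal (φ (t • (ω : E3))) :=
              ray_lintegral hσ0 hc1 hR hD hDnn hD0 hgm (fun t => hφ0 _) hgsupp
    _ = ENNReal.ofReal C * ∫⁻ ω : sphere (0 : E3) 1,
          (∫⁻ t in Set.Ioi (0 : ℝ),
            ENNReal.ofReal (t ^ 2) * ENNReal.ofReal (φ (t • (ω : E3))))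
        ∂((volume : Measure E3).toSphere) := by
        rw [lintegral_const_mul' _ _ ENNReal.ofReal_ne_top]
    _ = ENNReal.ofReal C * ∫⁻ y, ENNReal.ofReal (φ y) := by
        rw [← polar3 (fun y => ENNReal.ofReal (φ y)) hφm.ennreal_ofReal]
    _ = ENNReal.ofReal C := by rw [hφi, mul_one]

/-- L² boundedness of convolution with the variable-scale mollifier, with constant independent
of the domain: for `Ω ⊂ ℝ³` nonempty bounded open, `σ ∈ (0, 1/√3)`, `r(x) = σ·dist(x, Ωᶜ)`,
and `φ ≥ 0` measurable, vanishing for `|x| ≥ 2/3` and with `∫ φ = 1`, one has, for every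
`f ∈ L²(Ω)`,
`∫_Ω ∫_Ω r(x)⁻³ φ((x−z)/r(x)) f(z)² dz dx ≤ (1/(1 − √3 σ)) ∫_Ω f(z)² dz`. -/
theorem stmt_5 (Ω : Set (EuclideanSpace ℝ (Fin 3))) (hne : Ω.Nonempty) (hopen : IsOpen Ω)
    (hbdd : Bornology.IsBounded Ω) (σ : ℝ) (hσ0 : 0 < σ) (hσ1 : σ < 1 / Real.sqrt 3)
    (φ : EuclideanSpace ℝ (Fin 3) → ℝ) (hφm : Measurable φ) (hφ0 : ∀ x, 0 ≤ φ x)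
    (hφsupp : ∀ x, 2 / 3 ≤ ‖x‖ → φ x = 0) (hφ1 : ∫ x, φ x = 1)
    (f : EuclideanSpace ℝ (Fin 3) → ℝ) (hf : MemLp f 2 (volume.restrict Ω)) :
    ∫ x in Ω, ∫ z in Ω,
        ((σ * Metric.infDist x Ωᶜ) ^ 3)⁻¹ *
          φ ((σ * Metric.infDist x Ωᶜ)⁻¹ • (x - z)) * (f z) ^ 2 ≤
      (1 / (1 - Real.sqrt 3 * σ)) * ∫ z in Ω, (f z) ^ 2 := by
  have hs3 : (0:ℝ) < Real.sqrt 3 := Real.sqrt_pos.mpr (by norm_num)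
  have h23 : (2:ℝ)/3 < Real.sqrt 3 := by
    rw [show (3:ℝ) = ((3:ℝ):ℝ) from rfl] at *
    rw [Real.lt_sqrt (by norm_num : (0:ℝ) ≤ 2/3)]
    norm_num
  have hσ3 : Real.sqrt 3 * σ < 1 := by
    have h := (lt_div_iff₀ hs3).mp hσ1
    linarith [h]
  have hc1 : 2/3*σ < 1 := by nlinarith
  set C : ℝ := 1 / (1 - Real.sqrt 3 * σ) with hCdef
  have hC0 : 0 < C := one_div_pos.mpr (by linarith)
  have hR : 1 < (1 - 2/3*σ) * C := by
    rw [hCdef, mul_one_div, lt_div_iff₀ (by linarith)]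
    nlinarith
  have hΩc : Ωᶜ.Nonempty := by
    obtain ⟨r, hr⟩ := hbdd.subset_ball 0
    refine ⟨EuclideanSpace.single 0 (|r| + 1), fun h => ?_⟩
    have h2 := hr h
    rw [mem_ball, dist_zero_right, EuclideanSpace.norm_single, Real.norm_eq_abs] at h2
    have h3 : |r| + 1 ≤ |(|r| + 1)| := le_abs_self _
    have h4 : r ≤ |r| := le_abs_self r
    linarith
  have hφint : Integrable φ := by
    by_contra h
    rw [integral_undef h] at hφ1
    norm_num at hφ1
  have hφi : ∫⁻ y, ENNReal.ofReal (φ y) = 1 := by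
    rw [← ofReal_integral_eq_lintegral_ofReal hφint (ae_of_all _ hφ0), hφ1, ENNReal.ofReal_one]
  obtain ⟨f', hf'm, hff'⟩ := hf.1
  have hff2 : (fun z => f z ^ 2) =ᵐ[volume.restrict Ω] fun z => f' z ^ 2 :=
    hff'.mono fun z hz => by simp only [hz]
  set d : E3 → ℝ := fun x => infDist x Ωᶜ with hddef
  set k : E3 → E3 → ℝ := fun x z => ((σ * d x)^3)⁻¹ * φ ((σ * d x)⁻¹ • (x - z)) with hkdef
  set q : E3 → ℝ := fun z => f' z ^ 2 with hqdef
  have hgoalrw : ∀ x : E3, (∫ z in Ω, k x z * f z ^ 2) = ∫ z in Ω, k x z * q z := fun x =>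
    integral_congr_ae (hff'.mono fun z hz => by rw [hqdef]; simp only; rw [hz])
  have hRrw : (∫ z in Ω, f z ^ 2) = ∫ z in Ω, q z := integral_congr_ae hff2
  calc ∫ x in Ω, ∫ z in Ω, k x z * f z ^ 2
      = ∫ x in Ω, ∫ z in Ω, k x z * q z := integral_congr_ae (ae_of_all _ hgoalrw)
    _ ≤ C * ∫ z in Ω, q z := ?_
    _ = C * ∫ z in Ω, f z ^ 2 := by rw [hRrw]
  -- main analytic inequality with measurable data
  have hdc : Continuous d := continuous_infDist_pt _
  have hkm : Measurable (fun p : E3 × E3 => k p.1 p.2) := by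
    apply Measurable.mul
    · exact ((measurable_const.mul (hdc.measurable.comp measurable_fst)).pow_const 3).inv
    · exact hφm.comp (((measurable_const.mul (hdc.measurable.comp measurable_fst)).inv).smul
        (measurable_fst.sub measurable_snd))
  have hknn : ∀ x z, 0 ≤ k x z := fun x z =>
    mul_nonneg (inv_nonneg.mpr (pow_nonneg (mul_nonneg hσ0.le infDist_nonneg) 3)) (hφ0 _)
  have hqm : Measurable q := hf'm.measurable.pow_const 2
  have hq0 : ∀ z, 0 ≤ q z := fun z => sq_nonneg _
  have hqint : Integrable q (volume.restrict Ω) := hf.integrable_sq.congr hff2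
  have hWm : Measurable (fun p : E3 × E3 => k p.1 p.2 * q p.2) := hkm.mul (hqm.comp measurable_snd)
  set μ := volume.restrict Ω with hμdef
  set T := ∫⁻ x in Ω, ∫⁻ z in Ω, ENNReal.ofReal (k x z * q z) with hTdef
  have hT : T ≤ ENNReal.ofReal C * ENNReal.ofReal (∫ z in Ω, q z) := by
    rw [hTdef, lintegral_lintegral_swap (hWm.ennreal_ofReal.aemeasurable)]
    have hpoint : ∀ z ∈ Ω, ∫⁻ x in Ω, ENNReal.ofReal (k x z * q z)
        ≤ ENNReal.ofReal (q z) * ENNReal.ofReal C := by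
      intro z hz
      have hkzm : Measurable (fun x => ENNReal.ofReal (k x z)) :=
        (hkm.comp (measurable_id.prodMk measurable_const)).ennreal_ofReal
      calc ∫⁻ x in Ω, ENNReal.ofReal (k x z * q z)
          = ∫⁻ x in Ω, ENNReal.ofReal (k x z) * ENNReal.ofReal (q z) := by
            apply lintegral_congr
            intro x
            rw [← ENNReal.ofReal_mul (hknn x z)]
        _ = (∫⁻ x in Ω, ENNReal.ofReal (k x z)) * ENNReal.ofReal (q z) :=
            lintegral_mul_const _ hkzm
        _ ≤ ENNReal.ofReal C * ENNReal.ofReal (q z) :=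
            mul_le_mul_left (kernel_bound hopen hΩc hσ0 hc1 hR hφm hφ0 hφsupp hφi hz) _
        _ = ENNReal.ofReal (q z) * ENNReal.ofReal C := mul_comm _ _
    calc ∫⁻ z in Ω, ∫⁻ x in Ω, ENNReal.ofReal (k x z * q z)
        ≤ ∫⁻ z in Ω, ENNReal.ofReal (q z) * ENNReal.ofReal C :=
          setLIntegral_mono (hqm.ennreal_ofReal.mul measurable_const) hpoint
      _ = (∫⁻ z in Ω, ENNReal.ofReal (q z)) * ENNReal.ofReal C :=
          lintegral_mul_const _ hqm.ennreal_ofReal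
      _ = ENNReal.ofReal (∫ z in Ω, q z) * ENNReal.ofReal C := by
          rw [← ofReal_integral_eq_lintegral_ofReal hqint (ae_of_all _ hq0)]
      _ = ENNReal.ofReal C * ENNReal.ofReal (∫ z in Ω, q z) := mul_comm _ _
  have hTlt : T < ⊤ :=
    lt_of_le_of_lt hT (ENNReal.mul_lt_top ENNReal.ofReal_lt_top ENNReal.ofReal_lt_top)
  have hprod : ∫⁻ p : E3 × E3, ENNReal.ofReal (k p.1 p.2 * q p.2) ∂(μ.prod μ) = T := by
    rw [hTdef, lintegral_prod _ (hWm.ennreal_ofReal.aemeasurable)]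
  have hWint : Integrable (fun p : E3 × E3 => k p.1 p.2 * q p.2) (μ.prod μ) := by
    constructor
    · exact hWm.aestronglyMeasurable
    · rw [hasFiniteIntegral_iff_ofReal (ae_of_all _ fun p => mul_nonneg (hknn _ _) (hq0 _))]
      rw [hprod]
      exact hTlt
  calc ∫ x in Ω, ∫ z in Ω, k x z * q z
      = ∫ p : E3 × E3, k p.1 p.2 * q p.2 ∂(μ.prod μ) := integral_integral hWint
    _ = (∫⁻ p : E3 × E3, ENNReal.ofReal (k p.1 p.2 * q p.2) ∂(μ.prod μ)).toReal := by
        rw [integral_eq_lintegral_of_nonneg_ae (ae_of_all _ fun p => mul_nonneg (hknn _ _) (hq0 _))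
          hWm.aestronglyMeasurable]
    _ = T.toReal := by rw [hprod]
    _ ≤ (ENNReal.ofReal C * ENNReal.ofReal (∫ z in Ω, q z)).toReal :=
        ENNReal.toReal_mono (ENNReal.mul_lt_top ENNReal.ofReal_lt_top ENNReal.ofReal_lt_top).ne hT
    _ = C * ∫ z in Ω, q z := by
        rw [ENNReal.toReal_mul, ENNReal.toReal_ofReal hC0.le,
          ENNReal.toReal_ofReal (integral_nonneg hq0)]
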